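/- Let G be a graph of order β − 1 joined completely to an independent set of n − β + 1 vertices (i.e., the join K_{β−1} + complement-of-K_{n−β+1}). Then this graph contains no matching of size β. Consequently, for a spider T with p ≥ 2 legs each of length at least 2 and β = β(T) = min{ν(T − e) : e ∈ E(T)}, the edge-coloring of K_n (n ≥ |V(T)|) that colors all edges of K_{β−1} + complement-of-K_{n−β+1} with pairwise distinct colors and all remaining edges with one additional color contains no rainbow copy of T when T has no leg of even length or at least two legs of even length. -/

import Mathlib

open SimpleGraph Finset

/-- Number of colors used by an edge-coloring of the complete graph on `Fin n`. -/
noncomputable def colorCount {n : ℕ} (c : Sym2 (Fin n) → ℕ) : ℕ :=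
  (c '' (⊤ : SimpleGraph (Fin n)).edgeSet).ncard

/-- The coloring `c` of `K_n` admits a rainbow copy of the graph `G`. -/
def HasRainbowCopy {α : Type*} {n : ℕ} (c : Sym2 (Fin n) → ℕ) (G : SimpleGraph α) : Prop :=
  ∃ f : α → Fin n, Function.Injective f ∧
    ∀ e₁ ∈ G.edgeSet, ∀ e₂ ∈ G.edgeSet, e₁ ≠ e₂ → c (Sym2.map f e₁) ≠ c (Sym2.map f e₂)

/-- The anti-Ramsey number `ar(K_n, G)`: the maximum number of colors in an edge-coloring
of `K_n` with no rainbow copy of `G`. -/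
noncomputable def antiRamsey (n : ℕ) {α : Type*} (G : SimpleGraph α) : ℕ :=
  sSup {m | ∃ c : Sym2 (Fin n) → ℕ, ¬ HasRainbowCopy c G ∧ colorCount c = m}

/-- The spider with `p` legs of lengths `l 0, …, l (p-1)`: `none` is the center, and the
`i`-th leg is the path `center - (i,0) - (i,1) - ⋯ - (i, l i - 1)` (with `l i` edges). -/
def spider (p : ℕ) (l : Fin p → ℕ) : SimpleGraph (Option (Σ i : Fin p, Fin (l i))) where
  Adj u v :=
    (∃ a, u = none ∧ v = some a ∧ a.2.val = 0) ∨
    (∃ a, v = none ∧ u = some a ∧ a.2.val = 0) ∨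
    (∃ a b, u = some a ∧ v = some b ∧ a.1 = b.1 ∧
      (a.2.val + 1 = b.2.val ∨ b.2.val + 1 = a.2.val))
  symm := by
    constructor
    rintro u v h
    rcases h with ⟨a, h1, h2, h3⟩ | ⟨a, h1, h2, h3⟩ | ⟨a, b, h1, h2, h3, h4⟩
    · exact Or.inr (Or.inl ⟨a, h1, h2, h3⟩)
    · exact Or.inl ⟨a, h1, h2, h3⟩
    · exact Or.inr (Or.inr ⟨b, a, h2, h1, h3.symm, h4.symm⟩)
  loopless := by
    constructor
    rintro u h
    rcases h with ⟨a, h1, h2, h3⟩ | ⟨a, h1, h2, h3⟩ | ⟨a, b, h1, h2, h3, h4⟩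
    · rw [h1] at h2; exact absurd h2 (by simp)
    · rw [h2] at h1; exact absurd h1 (by simp)
    · rw [h1] at h2; injection h2 with h; subst h; omega

/-- `s` is a matching in `G`: a set of edges of `G` which pairwise share no vertex. -/
def IsMatchingIn {V : Type*} (G : SimpleGraph V) (s : Finset (Sym2 V)) : Prop :=
  (∀ e ∈ s, e ∈ G.edgeSet) ∧
  ∀ e₁ ∈ s, ∀ e₂ ∈ s, e₁ ≠ e₂ → ∀ v, v ∈ e₁ → v ∉ e₂

/-- The matching number `ν(G)`: the maximum size of a matching in `G`. -/
noncomputable def matchingNumber {V : Type*} (G : SimpleGraph V) : ℕ :=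
  sSup {m | ∃ s : Finset (Sym2 V), IsMatchingIn G s ∧ s.card = m}

/-- The join of a clique on the first `β - 1` vertices with an independent set on the
remaining `n - β + 1` vertices, i.e. `K_{β-1} + ∁K_{n-β+1}`, realized on `Fin n`. -/
def joinGraph (n β : ℕ) : SimpleGraph (Fin n) where
  Adj u v := u ≠ v ∧ (u.val < β - 1 ∨ v.val < β - 1)
  symm := by
    constructor
    rintro u v ⟨h1, h2⟩
    exact ⟨h1.symm, h2.symm⟩
  loopless := by constructor; rintro u ⟨h, -⟩; exact h rfl

/-- The graph `K_{β-1} + ∁K_{n-β+1}` contains no matching of size `β`; consequently, for a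
spider `T` with `p ≥ 2` legs, each of length at least 2, with `β = β(T) = min{ν(T-e)}`, any
edge-coloring of `K_n` (`n ≥ |V(T)|`) giving the edges of `K_{β-1} + ∁K_{n-β+1}` pairwise
distinct colors and all remaining pairs one further color has no rainbow copy of `T`,
provided `T` does not have exactly one leg of even length. -/
theorem joinGraph_no_matching_and_no_rainbow_spider (n β : ℕ) (hβ : 1 ≤ β) (hβn : β ≤ n) :
    (∀ s : Finset (Sym2 (Fin n)), IsMatchingIn (joinGraph n β) s → s.card < β) ∧
    (∀ (p : ℕ) (l : Fin p → ℕ), 2 ≤ p → (∀ i, 2 ≤ l i) →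
      β = sInf {m | ∃ e ∈ (spider p l).edgeSet,
        matchingNumber ((spider p l).deleteEdges {e}) = m} →
      1 + ∑ i, l i ≤ n →
      (Finset.univ.filter fun i => Even (l i)).card ≠ 1 →
      ∀ c : Sym2 (Fin n) → ℕ,
        (∀ e₁ ∈ (joinGraph n β).edgeSet, ∀ e₂ ∈ (joinGraph n β).edgeSet,
          e₁ ≠ e₂ → c e₁ ≠ c e₂) →
        (∀ e₁ e₂ : Sym2 (Fin n), e₁ ∉ (joinGraph n β).edgeSet → e₂ ∉ (joinGraph n β).edgeSet →
          c e₁ = c e₂) →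
        (∀ e₁ ∈ (joinGraph n β).edgeSet, ∀ e₂ : Sym2 (Fin n), e₂ ∉ (joinGraph n β).edgeSet →
          c e₁ ≠ c e₂) →
        ¬ HasRainbowCopy c (spider p l)) := by
  classical
  have key : ∀ s : Finset (Sym2 (Fin n)), IsMatchingIn (joinGraph n β) s → s.card < β := by
    intro s hs
    obtain ⟨hs1, hs2⟩ := hs
    have hch : ∀ e ∈ s, ∃ v : Fin n, v ∈ e ∧ v.val < β - 1 := by
      intro e he
      have hmem := hs1 e he
      induction e using Sym2.ind with
      | _ a b =>
        rw [SimpleGraph.mem_edgeSet] at hmem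
        obtain ⟨-, h | h⟩ := hmem
        · exact ⟨a, Sym2.mem_mk_left a b, h⟩
        · exact ⟨b, Sym2.mem_mk_right a b, h⟩
    have hle : s.card ≤ (Finset.range (β - 1)).card := by
      apply Finset.card_le_card_of_injOn
        (fun e => if h : ∃ v : Fin n, v ∈ e ∧ v.val < β - 1 then h.choose.val else 0)
      · intro e he
        have h : ∃ v : Fin n, v ∈ e ∧ v.val < β - 1 := hch e he
        simp only [dif_pos h]
        exact Finset.mem_range.mpr h.choose_spec.2
      · intro e₁ he₁ e₂ he₂ heq
        by_contra hne
        have h1 : ∃ v : Fin n, v ∈ e₁ ∧ v.val < β - 1 := hch e₁ he₁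
        have h2 : ∃ v : Fin n, v ∈ e₂ ∧ v.val < β - 1 := hch e₂ he₂
        simp only [dif_pos h1, dif_pos h2] at heq
        have hv : h1.choose = h2.choose := Fin.val_injective heq
        exact hs2 e₁ he₁ e₂ he₂ hne h1.choose h1.choose_spec.1 (hv ▸ h2.choose_spec.1)
    rw [Finset.card_range] at hle
    omega
  refine ⟨key, ?_⟩
  intro p l hp hl hβdef hn _hparity c hc1 hc2 hc3
  rintro ⟨f, hf, hrb⟩
  have hp0 : (0 : ℕ) < p := by omega
  have hl0 : 0 < l ⟨0, hp0⟩ := by have := hl ⟨0, hp0⟩; omega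
  have hedge : s((none : Option (Σ i : Fin p, Fin (l i))), some ⟨⟨0, hp0⟩, ⟨0, hl0⟩⟩) ∈
      (spider p l).edgeSet := by
    rw [SimpleGraph.mem_edgeSet]
    exact Or.inl ⟨⟨⟨0, hp0⟩, ⟨0, hl0⟩⟩, rfl, rfl, rfl⟩
  have hE0 : ∃ e₀ ∈ (spider p l).edgeSet, ∀ e ∈ (spider p l).edgeSet, e ≠ e₀ →
      Sym2.map f e ∈ (joinGraph n β).edgeSet := by
    by_cases hA : ∀ e ∈ (spider p l).edgeSet, Sym2.map f e ∈ (joinGraph n β).edgeSet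
    · exact ⟨_, hedge, fun e he _ => hA e he⟩
    · push_neg at hA
      obtain ⟨e₀, he₀, hout⟩ := hA
      refine ⟨e₀, he₀, fun e he hne => ?_⟩
      by_contra hout'
      exact hrb e he e₀ he₀ hne (hc2 _ _ hout' hout)
  obtain ⟨e₀, he₀, hmapin⟩ := hE0
  have hβle : β ≤ matchingNumber ((spider p l).deleteEdges {e₀}) := by
    rw [hβdef]
    exact Nat.sInf_le ⟨e₀, he₀, rfl⟩
  have hmem : ∃ s : Finset (Sym2 (Option (Σ i : Fin p, Fin (l i)))),
      IsMatchingIn ((spider p l).deleteEdges {e₀}) s ∧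
      s.card = matchingNumber ((spider p l).deleteEdges {e₀}) := by
    have hSne : Set.Nonempty {m | ∃ s : Finset (Sym2 (Option (Σ i : Fin p, Fin (l i)))),
        IsMatchingIn ((spider p l).deleteEdges {e₀}) s ∧ s.card = m} :=
      ⟨0, ∅, ⟨fun e he => absurd he (Finset.notMem_empty e),
        fun e he => absurd he (Finset.notMem_empty e)⟩, rfl⟩
    have hSbdd : BddAbove {m | ∃ s : Finset (Sym2 (Option (Σ i : Fin p, Fin (l i)))),
        IsMatchingIn ((spider p l).deleteEdges {e₀}) s ∧ s.card = m} := by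
      refine ⟨Fintype.card (Sym2 (Option (Σ i : Fin p, Fin (l i)))), ?_⟩
      rintro m ⟨s, -, rfl⟩
      exact Finset.card_le_univ s
    rw [matchingNumber]
    exact Nat.sSup_mem hSne hSbdd
  obtain ⟨s, hsM, hscard⟩ := hmem
  -- edges of s are spider edges distinct from e₀
  have hsub : ∀ e ∈ s, e ∈ (spider p l).edgeSet ∧ e ≠ e₀ := by
    intro e he
    have := hsM.1 e he
    rw [SimpleGraph.edgeSet_deleteEdges] at this
    exact ⟨this.1, by simpa using this.2⟩
  set t := s.image (Sym2.map f) with ht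
  have htM : IsMatchingIn (joinGraph n β) t := by
    constructor
    · intro x hx
      obtain ⟨e, he, rfl⟩ := Finset.mem_image.mp hx
      exact hmapin e (hsub e he).1 (hsub e he).2
    · intro x₁ hx₁ x₂ hx₂ hxne v hv1 hv2
      obtain ⟨a, ha, rfl⟩ := Finset.mem_image.mp hx₁
      obtain ⟨b, hb, rfl⟩ := Finset.mem_image.mp hx₂
      have hab : a ≠ b := by rintro rfl; exact hxne rfl
      obtain ⟨u, hu, hfu⟩ := Sym2.mem_map.mp hv1
      obtain ⟨w, hw, hfw⟩ := Sym2.mem_map.mp hv2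
      have huw : u = w := hf (hfu.trans hfw.symm)
      exact hsM.2 a ha b hb hab u hu (huw ▸ hw)
  have htcard : t.card = s.card := Finset.card_image_of_injective s (Sym2.map.injective hf)
  have := key t htM
  omega
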